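/- Let K : ℝⁿ × ℝʳ → ℝʳ be strictly differentiable at (D₀, x₀) with K(D₀, x₀) = 0 and with invertible partial Jacobian A := J_x K(D₀, x₀) : ℝʳ → ℝʳ, and let B := J_D K(D₀, x₀) : ℝⁿ → ℝʳ. Let φ be the implicit solution function with φ(D₀) = x₀ and K(D, φ(D)) = 0 near D₀, and fix c ∈ ℝʳ. Define E(D) = ⟪c, φ(D)⟫. Then E is differentiable at D₀ and its gradient is ∇E(D₀) = −Bᵀ (A⁻¹)ᵀ c, i.e., for every h ∈ ℝⁿ, ⟪∇E(D₀), h⟫ = −⟪c, A⁻¹ (B h)⟫. -/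

import Mathlib

open Filter Topology RealInnerProductSpace

/-- Locational marginal emissions by implicit differentiation of the KKT system: with `φ` the
implicit solution function of `K` at `(D₀, x₀)` and `E (D) = ⟪c, φ D⟫`, the function `E` is
differentiable at `D₀` with gradient `∇E (D₀) = -Bᵀ (A⁻¹)ᵀ c`, i.e.
`⟪∇E (D₀), h⟫ = -⟪c, A⁻¹ (B h)⟫` for every `h`. -/
theorem lme_gradient_implicit_differentiation
    (n r : ℕ)
    (K : EuclideanSpace ℝ (Fin n) × EuclideanSpace ℝ (Fin r) → EuclideanSpace ℝ (Fin r))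
    (D₀ : EuclideanSpace ℝ (Fin n)) (x₀ : EuclideanSpace ℝ (Fin r))
    (K' : (EuclideanSpace ℝ (Fin n) × EuclideanSpace ℝ (Fin r)) →L[ℝ]
      EuclideanSpace ℝ (Fin r))
    (hK : HasStrictFDerivAt K K' (D₀, x₀))
    (hK0 : K (D₀, x₀) = 0)
    (A : EuclideanSpace ℝ (Fin r) ≃L[ℝ] EuclideanSpace ℝ (Fin r))
    (hA : (A : EuclideanSpace ℝ (Fin r) →L[ℝ] EuclideanSpace ℝ (Fin r)) =
      K'.comp (ContinuousLinearMap.inr ℝ (EuclideanSpace ℝ (Fin n))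
        (EuclideanSpace ℝ (Fin r))))
    (B : EuclideanSpace ℝ (Fin n) →L[ℝ] EuclideanSpace ℝ (Fin r))
    (hB : B = K'.comp (ContinuousLinearMap.inl ℝ (EuclideanSpace ℝ (Fin n))
      (EuclideanSpace ℝ (Fin r))))
    (c : EuclideanSpace ℝ (Fin r)) :
    ∃ φ : EuclideanSpace ℝ (Fin n) → EuclideanSpace ℝ (Fin r),
      φ D₀ = x₀ ∧
      (∀ᶠ p : EuclideanSpace ℝ (Fin n) × EuclideanSpace ℝ (Fin r) in 𝓝 (D₀, x₀),
        (K p = 0 ↔ p.2 = φ p.1)) ∧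
      HasGradientAt (fun D => ⟪c, φ D⟫)
        (-(ContinuousLinearMap.adjoint B
          (ContinuousLinearMap.adjoint
            (A.symm : EuclideanSpace ℝ (Fin r) →L[ℝ] EuclideanSpace ℝ (Fin r)) c))) D₀ ∧
      ∀ h : EuclideanSpace ℝ (Fin n),
        ⟪-(ContinuousLinearMap.adjoint B
            (ContinuousLinearMap.adjoint
              (A.symm : EuclideanSpace ℝ (Fin r) →L[ℝ] EuclideanSpace ℝ (Fin r)) c)), h⟫ =
          -⟪c, A.symm (B h)⟫ := by
  -- Pointwise formulas for `K'`
  have hBh : ∀ h : EuclideanSpace ℝ (Fin n), B h = K' (h, 0) := by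
    intro h; rw [hB]; rfl
  have hAk : ∀ k : EuclideanSpace ℝ (Fin r), A k = K' (0, k) := by
    intro k; rw [← ContinuousLinearEquiv.coe_coe, hA]; rfl
  have hK' : ∀ h : EuclideanSpace ℝ (Fin n), ∀ k : EuclideanSpace ℝ (Fin r),
      K' (h, k) = B h + A k := by
    intro h k
    rw [hBh, hAk, ← map_add]
    congr 1
    simp
  set f : (EuclideanSpace ℝ (Fin n) × EuclideanSpace ℝ (Fin r)) →L[ℝ]
      (EuclideanSpace ℝ (Fin n) × EuclideanSpace ℝ (Fin r)) :=
    (ContinuousLinearMap.fst ℝ _ _).prod K' with hf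
  set g : (EuclideanSpace ℝ (Fin n) × EuclideanSpace ℝ (Fin r)) →L[ℝ]
      (EuclideanSpace ℝ (Fin n) × EuclideanSpace ℝ (Fin r)) :=
    (ContinuousLinearMap.fst ℝ _ _).prod
      ((A.symm : EuclideanSpace ℝ (Fin r) →L[ℝ] EuclideanSpace ℝ (Fin r)).comp
        (ContinuousLinearMap.snd ℝ _ _ - B.comp (ContinuousLinearMap.fst ℝ _ _))) with hg
  have hgf : ∀ p, g (f p) = p := by
    rintro ⟨h, k⟩
    simp [hf, hg, ContinuousLinearMap.prod_apply, hK' h k]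
  have hfg : ∀ p, f (g p) = p := by
    rintro ⟨u, v⟩
    simp only [hf, hg, ContinuousLinearMap.prod_apply, ContinuousLinearMap.coe_comp',
      Function.comp_apply, ContinuousLinearMap.sub_apply, ContinuousLinearMap.coe_fst',
      ContinuousLinearMap.coe_snd', ContinuousLinearEquiv.coe_coe]
    rw [hK' u (A.symm (v - B u)), A.apply_symm_apply]
    simp
  set T := ContinuousLinearEquiv.equivOfInverse f g hgf hfg with hT
  set Ψ : EuclideanSpace ℝ (Fin n) × EuclideanSpace ℝ (Fin r) →
      EuclideanSpace ℝ (Fin n) × EuclideanSpace ℝ (Fin r) := fun p => (p.1, K p) with hΨdef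
  have hΨa : Ψ (D₀, x₀) = (D₀, 0) := by simp [hΨdef, hK0]
  have hΨ : HasStrictFDerivAt Ψ (T : _ →L[ℝ] _) (D₀, x₀) := HasStrictFDerivAt.prodMk hasStrictFDerivAt_fst hK
  set ψ := hΨ.localInverse Ψ _ _ with hψdef
  have hψa : ψ (D₀, 0) = (D₀, x₀) := by
    rw [← hΨa]; exact hΨ.localInverse_apply_image
  set φ : EuclideanSpace ℝ (Fin n) → EuclideanSpace ℝ (Fin r) :=
    fun D => (ψ (D, 0)).2 with hφdef
  have hφD₀ : φ D₀ = x₀ := by simp [hφdef, hψa]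
  refine ⟨φ, hφD₀, ?_, ?_, ?_⟩
  · have h1 : ∀ᶠ p in 𝓝 (D₀, x₀), ψ (Ψ p) = p := hΨ.eventually_left_inverse
    have h2' : ∀ᶠ y in 𝓝 (Ψ (D₀, x₀)), Ψ (ψ y) = y := hΨ.eventually_right_inverse
    rw [hΨa] at h2'
    have hcont : Filter.Tendsto
        (fun p : EuclideanSpace ℝ (Fin n) × EuclideanSpace ℝ (Fin r) =>
          ((p.1, 0) : EuclideanSpace ℝ (Fin n) × EuclideanSpace ℝ (Fin r)))
        (𝓝 (D₀, x₀)) (𝓝 (D₀, 0)) := by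
      have : ContinuousAt
          (fun p : EuclideanSpace ℝ (Fin n) × EuclideanSpace ℝ (Fin r) =>
            ((p.1, 0) : EuclideanSpace ℝ (Fin n) × EuclideanSpace ℝ (Fin r))) (D₀, x₀) := by
        fun_prop
      simpa using this.tendsto
    have h2 := hcont.eventually h2'
    filter_upwards [h1, h2] with p hp1 hp2
    constructor
    · intro hKp
      have hΨp : Ψ p = (p.1, 0) := by simp [hΨdef, hKp]
      rw [hΨp] at hp1
      simp only [hφdef]
      exact (congrArg Prod.snd hp1).symm
    · intro hp
      simp only [hφdef] at hp
      simp only [hΨdef, Prod.ext_iff] at hp2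
      obtain ⟨hq1, hq2⟩ := hp2
      have hqp : ψ (p.1, 0) = p := Prod.ext hq1 hp.symm
      rw [← hqp]; exact hq2
  · have hψ' : HasStrictFDerivAt ψ (T.symm : _ →L[ℝ] _) (D₀, 0) := by
      rw [← hΨa]; exact hΨ.to_localInverse
    have hincl : HasStrictFDerivAt
        (fun D : EuclideanSpace ℝ (Fin n) =>
          ((D, 0) : EuclideanSpace ℝ (Fin n) × EuclideanSpace ℝ (Fin r)))
        (ContinuousLinearMap.inl ℝ _ _) D₀ :=
      (ContinuousLinearMap.inl ℝ (EuclideanSpace ℝ (Fin n))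
        (EuclideanSpace ℝ (Fin r))).hasStrictFDerivAt
    set φ' := (ContinuousLinearMap.snd ℝ (EuclideanSpace ℝ (Fin n)) (EuclideanSpace ℝ (Fin r))).comp
      ((T.symm : (EuclideanSpace ℝ (Fin n) × EuclideanSpace ℝ (Fin r)) →L[ℝ]
          (EuclideanSpace ℝ (Fin n) × EuclideanSpace ℝ (Fin r))).comp
        (ContinuousLinearMap.inl ℝ (EuclideanSpace ℝ (Fin n))
          (EuclideanSpace ℝ (Fin r)))) with hφ'def
    have hφ' : HasStrictFDerivAt φ φ' D₀ := by
      rw [hφdef]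
      exact (ContinuousLinearMap.snd ℝ _ _).hasStrictFDerivAt.comp _ (hψ'.comp D₀ hincl)
    have hφ'app : ∀ h, φ' h = -(A.symm (B h)) := by
      intro h
      have hTsymm : T.symm = ContinuousLinearEquiv.equivOfInverse g f hfg hgf :=
        ContinuousLinearEquiv.symm_equivOfInverse f g hgf hfg
      simp [hφ'def, hTsymm, ContinuousLinearEquiv.equivOfInverse_apply, hg]
    have hE : HasFDerivAt (fun D => ⟪c, φ D⟫) ((innerSL ℝ c).comp φ') D₀ :=
      (innerSL ℝ c).hasFDerivAt.comp _ hφ'.hasFDerivAt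
    rw [hasGradientAt_iff_hasFDerivAt]
    have heq : (InnerProductSpace.toDual ℝ (EuclideanSpace ℝ (Fin n))
        (-(ContinuousLinearMap.adjoint B
          (ContinuousLinearMap.adjoint
            (A.symm : EuclideanSpace ℝ (Fin r) →L[ℝ] EuclideanSpace ℝ (Fin r)) c))) :
          EuclideanSpace ℝ (Fin n) →L[ℝ] ℝ) = (innerSL ℝ c).comp φ' := by
      apply ContinuousLinearMap.ext
      intro h
      rw [ContinuousLinearMap.coe_comp', Function.comp_apply, InnerProductSpace.toDual_apply_apply]
      show ⟪_, h⟫ = ⟪c, φ' h⟫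
      rw [hφ'app h, inner_neg_left, inner_neg_right,
        ContinuousLinearMap.adjoint_inner_left, ContinuousLinearMap.adjoint_inner_left]
      rfl
    rw [heq]
    exact hE
  · intro h
    rw [inner_neg_left, ContinuousLinearMap.adjoint_inner_left,
      ContinuousLinearMap.adjoint_inner_left]
    rfl
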